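/- Let E be a finite-dimensional real inner product space and let (L¹ₙ)ₙ≥₀ and (L²ₙ)ₙ≥₀ be two sequences of continuous linear maps E → E. Assume that for some b > 0 and δ ∈ (0,1) one has ‖L¹ₙ − L²ₙ‖ ≤ δ·bⁿ for all n ≥ 0. Suppose there are two subspaces E¹ and E² of E and constants C⋆ > 1 and 0 < λ⋆ < μ⋆ with λ⋆ < b such that for each i ∈ {1,2} and all n ≥ 0: ‖Lⁱₙ v‖ ≤ C⋆·λ⋆ⁿ·‖v‖ for every v ∈ Eⁱ, and ‖Lⁱₙ w‖ ≥ C⋆⁻¹·μ⋆ⁿ·‖w‖ for every w orthogonal to Eⁱ. Then dist(E¹, E²) ≤ 3·C⋆²·(μ⋆/λ⋆)·δ^{(ln μ⋆ − ln λ⋆)/(ln b − ln λ⋆)}. -/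

import Mathlib

open scoped InnerProductSpace

open Submodule in
/-- Core analytic estimate: any vector contracted by `B` lies close to the
stable space of `A`. -/
private lemma bs_core {E : Type*} [NormedAddCommGroup E] [InnerProductSpace ℝ E]
    [FiniteDimensional ℝ E]
    (A B : ℕ → E →L[ℝ] E) (b δ Cs lam mu : ℝ)
    (hδ0 : 0 < δ) (hδ1 : δ < 1) (hCs : 1 < Cs) (hlam : 0 < lam) (hlammu : lam < mu)
    (hlamb : lam < b)
    (U : Submodule ℝ E)
    (hclose : ∀ n : ℕ, ‖A n - B n‖ ≤ δ * b ^ n)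
    (hAc : ∀ n : ℕ, ∀ v ∈ U, ‖A n v‖ ≤ Cs * lam ^ n * ‖v‖)
    (hAe : ∀ n : ℕ, ∀ w ∈ Uᗮ, Cs⁻¹ * mu ^ n * ‖w‖ ≤ ‖A n w‖)
    (v : E) (hBv : ∀ n : ℕ, ‖B n v‖ ≤ Cs * lam ^ n * ‖v‖) :
    ‖v - (orthogonalProjection U v : E)‖ ≤
      3 * Cs ^ 2 * (mu / lam) *
        δ ^ ((Real.log mu - Real.log lam) / (Real.log b - Real.log lam)) * ‖v‖ := by
  have hmu : 0 < mu := hlam.trans hlammu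
  have hb : 0 < b := hlam.trans hlamb
  have hCs0 : (0 : ℝ) < Cs := lt_trans one_pos hCs
  have hlogδ : Real.log δ < 0 := Real.log_neg hδ0 hδ1
  have hlb : Real.log lam < Real.log b := Real.log_lt_log hlam hlamb
  have hlm : Real.log lam < Real.log mu := Real.log_lt_log hlam hlammu
  set t : ℝ := (-Real.log δ) / (Real.log b - Real.log lam) with ht
  have ht0 : 0 ≤ t := div_nonneg (by linarith) (by linarith)
  set n : ℕ := ⌊t⌋₊ with hn
  have hnt : (n : ℝ) ≤ t := Nat.floor_le ht0
  have htn : t < n + 1 := Nat.lt_floor_add_one t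
  set θ : ℝ := (Real.log mu - Real.log lam) / (Real.log b - Real.log lam) with hθ
  have hteq : t * (Real.log b - Real.log lam) = -Real.log δ := by
    rw [ht, div_mul_cancel₀]
    exact ne_of_gt (by linarith)
  -- Key fact 1 : δ * b ^ n ≤ lam ^ n
  have key1 : δ * b ^ n ≤ lam ^ n := by
    have h1 : (n : ℝ) * (Real.log b - Real.log lam) ≤ -Real.log δ := by
      have h := mul_le_mul_of_nonneg_right hnt
        (le_of_lt (by linarith : (0 : ℝ) < Real.log b - Real.log lam))
      linarith [hteq]
    calc δ * b ^ n = Real.exp (Real.log δ + n * Real.log b) := by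
          rw [Real.exp_add, Real.exp_log hδ0, Real.exp_nat_mul, Real.exp_log hb]
      _ ≤ Real.exp ((n : ℝ) * Real.log lam) := Real.exp_le_exp.mpr (by nlinarith)
      _ = lam ^ n := by rw [Real.exp_nat_mul, Real.exp_log hlam]
  -- Key fact 2 : lam ^ n ≤ (mu / lam) * δ ^ θ * mu ^ n
  have hDne : Real.log b - Real.log lam ≠ 0 := by
    intro hcontra
    linarith
  have hδθ : δ ^ θ = Real.exp (t * (Real.log lam - Real.log mu)) := by
    rw [Real.rpow_def_of_pos hδ0]
    congr 1
    have hδlog : Real.log δ = -(t * (Real.log b - Real.log lam)) := by linarith [hteq]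
    calc Real.log δ * θ
        = -(t * (Real.log b - Real.log lam)) *
            ((Real.log mu - Real.log lam) / (Real.log b - Real.log lam)) := by
          rw [hδlog, hθ]
      _ = -(t * (Real.log mu - Real.log lam)) *
            ((Real.log b - Real.log lam) / (Real.log b - Real.log lam)) := by ring
      _ = t * (Real.log lam - Real.log mu) := by
          rw [div_self hDne]
          ring
  have key2 : lam ^ n ≤ (mu / lam) * δ ^ θ * mu ^ n := by
    have hml : mu / lam = Real.exp (Real.log mu - Real.log lam) := by
      rw [Real.exp_sub, Real.exp_log hmu, Real.exp_log hlam]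
    calc lam ^ n = Real.exp ((n : ℝ) * Real.log lam) := by
          rw [Real.exp_nat_mul, Real.exp_log hlam]
      _ ≤ Real.exp ((Real.log mu - Real.log lam) + t * (Real.log lam - Real.log mu)
            + (n : ℝ) * Real.log mu) := by
          apply Real.exp_le_exp.mpr
          nlinarith [htn, hlm]
      _ = (mu / lam) * δ ^ θ * mu ^ n := by
          rw [Real.exp_add, Real.exp_add, hml, hδθ, Real.exp_nat_mul, Real.exp_log hmu]
  -- set up the projection
  set p : E := (orthogonalProjection U v : E) with hp
  set w : E := v - p with hwdef
  have hwU : w ∈ Uᗮ := sub_starProjection_mem_orthogonal (K := U) v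
  have hpU : p ∈ U := SetLike.coe_mem _
  have hpnorm : ‖p‖ ≤ ‖v‖ := by
    have h1 := (orthogonalProjection U).le_opNorm v
    have h2 := orthogonalProjection_norm_le U
    have h3 : ‖p‖ = ‖orthogonalProjection U v‖ := rfl
    have h4 : (0 : ℝ) ≤ ‖v‖ := norm_nonneg v
    nlinarith
  -- main chain of inequalities
  have hchain : Cs⁻¹ * mu ^ n * ‖w‖ ≤ 3 * Cs * lam ^ n * ‖v‖ := by
    have e1 : Cs⁻¹ * mu ^ n * ‖w‖ ≤ ‖A n w‖ := hAe n w hwU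
    have e2 : ‖A n w‖ ≤ ‖A n v‖ + ‖A n p‖ := by
      have : A n w = A n v - A n p := by rw [hwdef, map_sub]
      rw [this]; exact norm_sub_le _ _
    have e3 : ‖A n v‖ ≤ ‖B n v‖ + ‖(A n - B n) v‖ := by
      have : A n v = B n v + (A n - B n) v := by simp
      rw [this]; exact norm_add_le _ _
    have e4 : ‖(A n - B n) v‖ ≤ δ * b ^ n * ‖v‖ := by
      calc ‖(A n - B n) v‖ ≤ ‖A n - B n‖ * ‖v‖ := (A n - B n).le_opNorm v
        _ ≤ δ * b ^ n * ‖v‖ := by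
            apply mul_le_mul_of_nonneg_right (hclose n) (norm_nonneg v)
    have e5 : ‖A n p‖ ≤ Cs * lam ^ n * ‖v‖ := by
      calc ‖A n p‖ ≤ Cs * lam ^ n * ‖p‖ := hAc n p hpU
        _ ≤ Cs * lam ^ n * ‖v‖ := by
            apply mul_le_mul_of_nonneg_left hpnorm
            positivity
    have e6 : δ * b ^ n * ‖v‖ ≤ Cs * lam ^ n * ‖v‖ := by
      have hln : (0 : ℝ) ≤ lam ^ n := le_of_lt (pow_pos hlam n)
      have := mul_le_mul_of_nonneg_right key1 (norm_nonneg v)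
      nlinarith [mul_nonneg hln (norm_nonneg v)]
    have := hBv n
    linarith
  have hmun : (0 : ℝ) < mu ^ n := pow_pos hmu n
  have h2' : mu ^ n * ‖w‖ ≤ Cs * (3 * Cs * lam ^ n * ‖v‖) := by
    have h := mul_le_mul_of_nonneg_left hchain hCs0.le
    rwa [← mul_assoc, ← mul_assoc, mul_inv_cancel₀ (ne_of_gt hCs0), one_mul] at h
  have h3 : ‖w‖ ≤ 3 * Cs ^ 2 * (lam ^ n / mu ^ n) * ‖v‖ := by
    rw [show (3 : ℝ) * Cs ^ 2 * (lam ^ n / mu ^ n) * ‖v‖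
        = Cs * (3 * Cs * lam ^ n * ‖v‖) / mu ^ n by field_simp]
    rw [le_div_iff₀ hmun]
    linarith [h2']
  have h4 : lam ^ n / mu ^ n ≤ (mu / lam) * δ ^ θ := by
    rw [div_le_iff₀ hmun]
    linarith [key2]
  calc ‖w‖ ≤ 3 * Cs ^ 2 * (lam ^ n / mu ^ n) * ‖v‖ := h3
    _ ≤ 3 * Cs ^ 2 * ((mu / lam) * δ ^ θ) * ‖v‖ := by
        apply mul_le_mul_of_nonneg_right _ (norm_nonneg v)
        apply mul_le_mul_of_nonneg_left h4
        positivity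
    _ = 3 * Cs ^ 2 * (mu / lam) * δ ^ θ * ‖v‖ := by ring

open Submodule in
/-- If every vector of `U` is `r`-close to `V`, then the orthogonal projection
onto `U` of a vector orthogonal to `V` is `r`-small. -/
private lemma bs_proj_bound {E : Type*} [NormedAddCommGroup E] [InnerProductSpace ℝ E]
    [FiniteDimensional ℝ E] (U V : Submodule ℝ E) (r : ℝ) (hr : 0 ≤ r)
    (h : ∀ u ∈ U, ‖u - (orthogonalProjection V u : E)‖ ≤ r * ‖u‖)
    (y : E) (hy : y ∈ Vᗮ) : ‖(orthogonalProjection U y : E)‖ ≤ r * ‖y‖ := by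
  set p : E := (orthogonalProjection U y : E) with hpdef
  have h1 : ‖p‖ ^ 2 = ⟪p, y⟫_ℝ := by
    have hz : ⟪p, y - p⟫_ℝ = 0 :=
      inner_right_of_mem_orthogonal (SetLike.coe_mem _)
        (sub_starProjection_mem_orthogonal (K := U) y)
    have hsplit : ⟪p, y⟫_ℝ = ⟪p, p⟫_ℝ + ⟪p, y - p⟫_ℝ := by
      rw [← inner_add_right]
      congr 1
      abel
    rw [hsplit, hz, add_zero, real_inner_self_eq_norm_sq]
  have h2 : ⟪p, y⟫_ℝ = ⟪p - (orthogonalProjection V p : E), y⟫_ℝ := by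
    have hz : ⟪(orthogonalProjection V p : E), y⟫_ℝ = 0 :=
      inner_right_of_mem_orthogonal (SetLike.coe_mem _) hy
    rw [inner_sub_left, hz, sub_zero]
  have h3 : ⟪p - (orthogonalProjection V p : E), y⟫_ℝ
      ≤ ‖p - (orthogonalProjection V p : E)‖ * ‖y‖ := real_inner_le_norm _ _
  have h4 : ‖p - (orthogonalProjection V p : E)‖ ≤ r * ‖p‖ := h p (SetLike.coe_mem _)
  have h5 : ‖p‖ ^ 2 ≤ r * ‖p‖ * ‖y‖ := by
    calc ‖p‖ ^ 2 = ⟪p - (orthogonalProjection V p : E), y⟫_ℝ := by rw [h1, h2]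
      _ ≤ ‖p - (orthogonalProjection V p : E)‖ * ‖y‖ := h3
      _ ≤ r * ‖p‖ * ‖y‖ := mul_le_mul_of_nonneg_right h4 (norm_nonneg y)
  by_cases hp0 : ‖p‖ = 0
  · rw [hp0]
    positivity
  · have hp0' : 0 < ‖p‖ := lt_of_le_of_ne (norm_nonneg p) (Ne.symm hp0)
    nlinarith

open Submodule in
/-- Brin–Stuck subspace perturbation lemma (Lemma B.2 of the paper). -/
theorem brin_stuck_subspace_perturbation
    {E : Type*} [NormedAddCommGroup E] [InnerProductSpace ℝ E] [FiniteDimensional ℝ E]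
    (L : Fin 2 → ℕ → E →L[ℝ] E) (b δ : ℝ) (hb : 0 < b) (hδ : δ ∈ Set.Ioo (0 : ℝ) 1)
    (hclose : ∀ n : ℕ, ‖L 0 n - L 1 n‖ ≤ δ * b ^ n)
    (Esub : Fin 2 → Submodule ℝ E) (Cs lam mu : ℝ)
    (hCs : 1 < Cs) (hlam : 0 < lam) (hlammu : lam < mu) (hlamb : lam < b)
    (hcontr : ∀ i : Fin 2, ∀ n : ℕ, ∀ v ∈ Esub i, ‖L i n v‖ ≤ Cs * lam ^ n * ‖v‖)
    (hexpand : ∀ i : Fin 2, ∀ n : ℕ, ∀ w ∈ (Esub i)ᗮ, Cs⁻¹ * mu ^ n * ‖w‖ ≤ ‖L i n w‖) :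
    ‖(Esub 0).subtypeL.comp (Submodule.orthogonalProjectionOnto (Esub 0)) -
        (Esub 1).subtypeL.comp (Submodule.orthogonalProjectionOnto (Esub 1))‖ ≤
      3 * Cs ^ 2 * (mu / lam) *
        δ ^ ((Real.log mu - Real.log lam) / (Real.log b - Real.log lam)) := by
  obtain ⟨hδ0, hδ1⟩ := hδ
  have hmu : 0 < mu := hlam.trans hlammu
  set θ : ℝ := (Real.log mu - Real.log lam) / (Real.log b - Real.log lam) with hθ
  set r : ℝ := 3 * Cs ^ 2 * (mu / lam) * δ ^ θ with hrdef
  have hCs0 : (0 : ℝ) < Cs := lt_trans one_pos hCs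
  have hr0 : 0 ≤ r := by
    rw [hrdef]
    positivity
  -- core estimates in both directions
  have core01 : ∀ v ∈ Esub 1, ‖v - (orthogonalProjection (Esub 0) v : E)‖ ≤ r * ‖v‖ := by
    intro v hv
    have := bs_core (L 0) (L 1) b δ Cs lam mu hδ0 hδ1 hCs hlam hlammu hlamb (Esub 0)
      hclose (hcontr 0) (hexpand 0) v (fun n => hcontr 1 n v hv)
    rw [hrdef]
    linarith [this]
  have core10 : ∀ v ∈ Esub 0, ‖v - (orthogonalProjection (Esub 1) v : E)‖ ≤ r * ‖v‖ := by
    intro v hv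
    have hclose' : ∀ n : ℕ, ‖L 1 n - L 0 n‖ ≤ δ * b ^ n := by
      intro n
      rw [norm_sub_rev]
      exact hclose n
    have := bs_core (L 1) (L 0) b δ Cs lam mu hδ0 hδ1 hCs hlam hlammu hlamb (Esub 1)
      hclose' (hcontr 1) (hexpand 1) v (fun n => hcontr 0 n v hv)
    rw [hrdef]
    linarith [this]
  apply ContinuousLinearMap.opNorm_le_bound _ hr0
  intro x
  set u : E := (orthogonalProjection (Esub 1) x : E) with hudef
  set y : E := x - u with hydef
  have huE : u ∈ Esub 1 := SetLike.coe_mem _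
  have hyE : y ∈ (Esub 1)ᗮ := sub_starProjection_mem_orthogonal (K := Esub 1) x
  have hxuy : x = u + y := by rw [hydef]; abel
  -- decomposition of (P₀ - P₁) x into two orthogonal pieces
  set a : E := (orthogonalProjection (Esub 0) u : E) - u with hadef
  set c : E := (orthogonalProjection (Esub 0) y : E) with hcdef
  have hdecomp : ((Esub 0).subtypeL.comp (orthogonalProjection (Esub 0)) -
      (Esub 1).subtypeL.comp (orthogonalProjection (Esub 1))) x = a + c := by
    have hPx : (orthogonalProjection (Esub 0) x : E)
        = (orthogonalProjection (Esub 0) u : E) + (orthogonalProjection (Esub 0) y : E) := by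
      conv_lhs => rw [hxuy]
      rw [map_add]
      push_cast
      ring
    simp only [ContinuousLinearMap.sub_apply, ContinuousLinearMap.comp_apply,
      Submodule.subtypeL_apply]
    rw [hPx, hadef, hcdef, ← hudef]
    abel
  -- norms of the two pieces
  have hna : ‖a‖ ≤ r * ‖u‖ := by
    rw [hadef, norm_sub_rev]
    exact core01 u huE
  have hnc : ‖c‖ ≤ r * ‖y‖ := bs_proj_bound (Esub 0) (Esub 1) r hr0 core10 y hyE
  -- orthogonality of the pieces
  have haorth : a ∈ (Esub 0)ᗮ := by
    rw [hadef]
    have := sub_starProjection_mem_orthogonal (K := Esub 0) u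
    have h2 : (orthogonalProjection (Esub 0) u : E) - u
        = -(u - (orthogonalProjection (Esub 0) u : E)) := by abel
    rw [h2]
    exact neg_mem this
  have hcmem : c ∈ Esub 0 := SetLike.coe_mem _
  have hac : ⟪a, c⟫_ℝ = 0 := inner_left_of_mem_orthogonal hcmem haorth
  have huy : ⟪u, y⟫_ℝ = 0 := inner_right_of_mem_orthogonal huE hyE
  -- Pythagoras on both sides
  have hsum : ‖a + c‖ ^ 2 = ‖a‖ ^ 2 + ‖c‖ ^ 2 := by
    rw [norm_add_sq_real, hac]
    ring
  have hx2 : ‖x‖ ^ 2 = ‖u‖ ^ 2 + ‖y‖ ^ 2 := by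
    rw [hxuy, norm_add_sq_real, huy]
    ring
  have hfinal2 : ‖a + c‖ ^ 2 ≤ (r * ‖x‖) ^ 2 := by
    have h1 : ‖a‖ ^ 2 ≤ (r * ‖u‖) ^ 2 := by
      have := norm_nonneg a
      nlinarith
    have h2 : ‖c‖ ^ 2 ≤ (r * ‖y‖) ^ 2 := by
      have := norm_nonneg c
      nlinarith
    have hx2' : (r * ‖x‖) ^ 2 = (r * ‖u‖) ^ 2 + (r * ‖y‖) ^ 2 := by
      rw [mul_pow, mul_pow, mul_pow, hx2]
      ring
    rw [hsum, hx2']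
    linarith
  rw [hdecomp]
  have h1 : 0 ≤ ‖a + c‖ := norm_nonneg _
  have h2 : 0 ≤ r * ‖x‖ := by positivity
  nlinarith
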